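/- If the set of nonnegative arrays 𝐏 satisfying all signed marginal constraints Σ_{k : k_ℓ = j} X_k 𝐏_k = p^{(ℓ)}_j is nonempty, then the problem of minimizing S(𝐏, 𝐐) over this feasible set admits a minimizer, and the minimizer is unique. -/

import Mathlib

open scoped BigOperators

/-- If the feasible set of nonnegative arrays satisfying the signed
marginal constraints is nonempty, then the minimization of `S(𝐏, 𝐐)` over it admits
a unique minimizer. -/
theorem signed_schrodinger_unique_minimizer
    (n : ℕ) (hn : 1 ≤ n) (I : Fin n → Type)
    [∀ ℓ, Fintype (I ℓ)] [∀ ℓ, Nonempty (I ℓ)] [∀ ℓ, DecidableEq (I ℓ)]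
    (Q : (∀ ℓ, I ℓ) → ℝ) (hQ : ∀ k, 0 < Q k)
    (X : (∀ ℓ, I ℓ) → ℝ) (hX : ∀ k, X k = 1 ∨ X k = -1)
    (p : ∀ ℓ, I ℓ → ℝ)
    (hfeas : ∃ P : (∀ ℓ, I ℓ) → ℝ, (∀ k, 0 ≤ P k) ∧
      ∀ (ℓ : Fin n) (j : I ℓ),
        ∑ k : ∀ ℓ, I ℓ, (if k ℓ = j then X k * P k else 0) = p ℓ j) :
    ∃! Pstar : (∀ ℓ, I ℓ) → ℝ,
      (∀ k, 0 ≤ Pstar k) ∧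
      (∀ (ℓ : Fin n) (j : I ℓ),
        ∑ k : ∀ ℓ, I ℓ, (if k ℓ = j then X k * Pstar k else 0) = p ℓ j) ∧
      (∀ P : (∀ ℓ, I ℓ) → ℝ, (∀ k, 0 ≤ P k) →
        (∀ (ℓ : Fin n) (j : I ℓ),
          ∑ k : ∀ ℓ, I ℓ, (if k ℓ = j then X k * P k else 0) = p ℓ j) →
        ∑ k : ∀ ℓ, I ℓ, Pstar k * (Real.log (Pstar k / Q k) - 1) ≤
          ∑ k : ∀ ℓ, I ℓ, P k * (Real.log (P k / Q k) - 1)) := by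
  classical
  obtain ⟨P₀, hP₀nn, hP₀c⟩ := hfeas
  set g : (∀ ℓ, I ℓ) → ℝ → ℝ := fun k x => x * Real.log x - (Real.log (Q k) + 1) * x with hg
  have hterm : ∀ (P : (∀ ℓ, I ℓ) → ℝ) (k : ∀ ℓ, I ℓ), P k * (Real.log (P k / Q k) - 1) = g k (P k) := by
    intro P k
    by_cases h : P k = 0
    · simp [h, hg]
    · rw [Real.log_div h (hQ k).ne']; simp only [hg]; ring
  set F : ((∀ ℓ, I ℓ) → ℝ) → ℝ := fun P => ∑ k : ∀ ℓ, I ℓ, g k (P k) with hF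
  have hFeq : ∀ P : (∀ ℓ, I ℓ) → ℝ, ∑ k : ∀ ℓ, I ℓ, P k * (Real.log (P k / Q k) - 1) = F P := fun P =>
    Finset.sum_congr rfl fun k _ => hterm P k
  have hgc : ∀ k : ∀ ℓ, I ℓ, Continuous (g k) := fun k =>
    Real.continuous_mul_log.sub (continuous_const.mul continuous_id)
  have hFc : Continuous F :=
    continuous_finset_sum _ fun k _ => (hgc k).comp (continuous_apply k)
  -- lower bound for each term
  have hglb : ∀ (k : ∀ ℓ, I ℓ) (x : ℝ), 0 ≤ x → -Q k ≤ g k x := by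
    intro k x hx
    rcases eq_or_lt_of_le hx with h | h
    · rw [← h]
      simp only [hg, Real.log_zero, mul_zero, zero_mul, sub_zero]
      linarith [hQ k]
    · have h1 := Real.add_one_le_exp (Real.log (Q k) - Real.log x)
      rw [Real.exp_sub, Real.exp_log (hQ k), Real.exp_log h] at h1
      have h2 : x * (Real.log (Q k) - Real.log x + 1) ≤ x * (Q k / x) :=
        mul_le_mul_of_nonneg_left h1 h.le
      rw [mul_div_cancel₀ _ h.ne'] at h2
      simp only [hg]; nlinarith
  -- feasible set
  set C : Set ((∀ ℓ, I ℓ) → ℝ) := {P | (∀ k, 0 ≤ P k) ∧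
    ∀ (ℓ : Fin n) (j : I ℓ),
      ∑ k : ∀ ℓ, I ℓ, (if k ℓ = j then X k * P k else 0) = p ℓ j} with hC
  have hP₀C : P₀ ∈ C := ⟨hP₀nn, hP₀c⟩
  -- each term is bounded on the sublevel set
  set M : ℝ := F P₀ + ∑ k : ∀ ℓ, I ℓ, Q k with hM
  have hQsum_nn : (0:ℝ) ≤ ∑ k : ∀ ℓ, I ℓ, Q k := Finset.sum_nonneg fun k _ => (hQ k).le
  have htermbd : ∀ P ∈ C, F P ≤ F P₀ → ∀ k : ∀ ℓ, I ℓ, g k (P k) ≤ M := by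
    intro P hP hFP k
    have hsplit : F P = g k (P k) + ∑ k' ∈ Finset.univ.erase k, g k' (P k') :=
      (Finset.add_sum_erase _ (fun k' => g k' (P k')) (Finset.mem_univ k)).symm
    have hrest : ∑ k' ∈ Finset.univ.erase k, (-(Q k')) ≤
        ∑ k' ∈ Finset.univ.erase k, g k' (P k') :=
      Finset.sum_le_sum fun k' _ => hglb k' (P k') (hP.1 k')
    have hQe : ∑ k' ∈ Finset.univ.erase k, Q k' ≤ ∑ k' : ∀ ℓ, I ℓ, Q k' :=
      Finset.sum_le_sum_of_subset_of_nonneg (Finset.erase_subset _ _)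
        (fun k' _ _ => (hQ k').le)
    rw [Finset.sum_neg_distrib] at hrest
    simp only [hM]; linarith
  -- coordinate bound on the sublevel set
  set R : (∀ ℓ, I ℓ) → ℝ := fun k => max 1 (Real.exp (Real.log (Q k) + 2 + |M|)) with hR
  have hbd : ∀ P ∈ C, F P ≤ F P₀ → ∀ k : ∀ ℓ, I ℓ, P k ≤ R k := by
    intro P hP hFP k
    by_contra hgt
    push_neg at hgt
    have hx1 : (1:ℝ) < P k := lt_of_le_of_lt (le_max_left _ _) hgt
    have hxe : Real.exp (Real.log (Q k) + 2 + |M|) < P k :=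
      lt_of_le_of_lt (le_max_right _ _) hgt
    have hlog : Real.log (Q k) + 2 + |M| < Real.log (P k) :=
      (Real.lt_log_iff_exp_lt (by linarith)).mpr hxe
    have habs : M ≤ |M| := le_abs_self M
    have hgk := htermbd P hP hFP k
    simp only [hg] at hgk
    have hxpos : (0:ℝ) < P k := by linarith
    have h5 : P k * (Real.log (Q k) + 2 + |M|) < P k * Real.log (P k) :=
      mul_lt_mul_of_pos_left hlog hxpos
    nlinarith [mul_lt_mul_of_pos_right hx1 (show (0:ℝ) < 1 + |M| by positivity)]
  -- the restricted set is compact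
  set D : Set ((∀ ℓ, I ℓ) → ℝ) := C ∩ {P | F P ≤ F P₀} with hD
  have hCclosed : IsClosed C := by
    have hCeq : C = (⋂ k : ∀ ℓ, I ℓ, {P : (∀ ℓ, I ℓ) → ℝ | 0 ≤ P k}) ∩
        ⋂ ℓ : Fin n, ⋂ j : I ℓ,
          {P : (∀ ℓ, I ℓ) → ℝ | ∑ k : ∀ ℓ, I ℓ, (if k ℓ = j then X k * P k else 0) = p ℓ j} := by
      ext P
      simp [hC, Set.mem_iInter]
    rw [hCeq]
    refine (isClosed_iInter fun k =>
      isClosed_le continuous_const (continuous_apply k)).inter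
      (isClosed_iInter fun ℓ => isClosed_iInter fun j =>
        isClosed_eq (continuous_finset_sum _ fun k _ => ?_) continuous_const)
    by_cases h : k ℓ = j
    · simpa [h] using ((continuous_const.mul (continuous_apply k)).congr fun _ => rfl :
        Continuous fun P : (∀ ℓ, I ℓ) → ℝ => X k * P k)
    · simpa [h] using continuous_const (y := (0:ℝ))
  have hDclosed : IsClosed D := hCclosed.inter (isClosed_le hFc continuous_const)
  have hDsub : D ⊆ Set.pi Set.univ fun k => Set.Icc (0:ℝ) (R k) := by
    rintro P ⟨hPC, hPF⟩ k _
    exact ⟨hPC.1 k, hbd P hPC hPF k⟩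
  have hDcpt : IsCompact D :=
    IsCompact.of_isClosed_subset (isCompact_univ_pi fun k => isCompact_Icc) hDclosed hDsub
  have hDne : D.Nonempty := ⟨P₀, hP₀C, show F P₀ ≤ F P₀ from le_rfl⟩
  obtain ⟨Pstar, hPstarD, hmin⟩ := hDcpt.exists_isMinOn hDne hFc.continuousOn
  have hminAll : ∀ P ∈ C, F Pstar ≤ F P := by
    intro P hP
    by_cases h : F P ≤ F P₀
    · exact isMinOn_iff.mp hmin P ⟨hP, h⟩
    · push_neg at h
      exact le_trans (isMinOn_iff.mp hmin P₀ ⟨hP₀C, show F P₀ ≤ F P₀ from le_rfl⟩) h.le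
  -- midpoint feasibility
  have hmid : ∀ A B : (∀ ℓ, I ℓ) → ℝ,
      (∀ (ℓ : Fin n) (j : I ℓ), ∑ k : ∀ ℓ, I ℓ, (if k ℓ = j then X k * A k else 0) = p ℓ j) →
      (∀ (ℓ : Fin n) (j : I ℓ), ∑ k : ∀ ℓ, I ℓ, (if k ℓ = j then X k * B k else 0) = p ℓ j) →
      ∀ (ℓ : Fin n) (j : I ℓ),
        ∑ k : ∀ ℓ, I ℓ, (if k ℓ = j then X k * ((A k + B k) / 2) else 0) = p ℓ j := by
    intro A B hA hB ℓ j
    have : ∀ k : ∀ ℓ, I ℓ, (if k ℓ = j then X k * ((A k + B k) / 2) else 0) =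
        ((if k ℓ = j then X k * A k else 0) + (if k ℓ = j then X k * B k else 0)) / 2 := by
      intro k; split_ifs with h
      · ring
      · simp
    rw [Finset.sum_congr rfl fun k _ => this k, ← Finset.sum_div,
      Finset.sum_add_distrib, hA ℓ j, hB ℓ j]
    ring
  -- strict convexity of F on the nonnegative orthant
  have hstrict : ∀ A B : (∀ ℓ, I ℓ) → ℝ, (∀ k, 0 ≤ A k) → (∀ k, 0 ≤ B k) → A ≠ B →
      F (fun k => (A k + B k) / 2) < (F A + F B) / 2 := by
    intro A B hA hB hne
    have hk0 : ∃ k, A k ≠ B k := by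
      by_contra h; push_neg at h; exact hne (funext h)
    obtain ⟨k0, hk0⟩ := hk0
    have hmlog : ∀ (k : ∀ ℓ, I ℓ) (a b : ℝ), 0 ≤ a → 0 ≤ b →
        g k ((a + b) / 2) ≤ (g k a + g k b) / 2 := by
      intro k a b ha hb
      have := Real.strictConvexOn_mul_log.convexOn.2 (Set.mem_Ici.mpr ha)
        (Set.mem_Ici.mpr hb) (by norm_num : (0:ℝ) ≤ 1/2) (by norm_num : (0:ℝ) ≤ 1/2)
        (by norm_num)
      simp only [smul_eq_mul] at this
      have heq : (1:ℝ)/2 * a + 1/2 * b = (a + b) / 2 := by ring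
      rw [heq] at this
      simp only [hg]; nlinarith
    have hmlog' : ∀ (k : ∀ ℓ, I ℓ) (a b : ℝ), 0 ≤ a → 0 ≤ b → a ≠ b →
        g k ((a + b) / 2) < (g k a + g k b) / 2 := by
      intro k a b ha hb hab
      have := Real.strictConvexOn_mul_log.2 (Set.mem_Ici.mpr ha)
        (Set.mem_Ici.mpr hb) hab (by norm_num : (0:ℝ) < 1/2) (by norm_num : (0:ℝ) < 1/2)
        (by norm_num)
      simp only [smul_eq_mul] at this
      have heq : (1:ℝ)/2 * a + 1/2 * b = (a + b) / 2 := by ring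
      rw [heq] at this
      simp only [hg]; nlinarith
    have hsum : ∑ k : ∀ ℓ, I ℓ, g k ((A k + B k) / 2) <
        ∑ k : ∀ ℓ, I ℓ, (g k (A k) + g k (B k)) / 2 := by
      refine Finset.sum_lt_sum (fun k _ => hmlog k (A k) (B k) (hA k) (hB k))
        ⟨k0, Finset.mem_univ k0, hmlog' k0 (A k0) (B k0) (hA k0) (hB k0) hk0⟩
    calc F (fun k => (A k + B k) / 2) = ∑ k : ∀ ℓ, I ℓ, g k ((A k + B k) / 2) := rfl
      _ < ∑ k : ∀ ℓ, I ℓ, (g k (A k) + g k (B k)) / 2 := hsum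
      _ = (F A + F B) / 2 := by
          rw [← Finset.sum_div, Finset.sum_add_distrib]
  -- conclusion
  refine ⟨Pstar, ⟨hPstarD.1.1, hPstarD.1.2, ?_⟩, ?_⟩
  · intro P hPn hPc
    rw [hFeq, hFeq]
    exact hminAll P ⟨hPn, hPc⟩
  · rintro P ⟨hPn, hPc, hPmin⟩
    by_contra hne
    have h1 : F P ≤ F Pstar := by
      have := hPmin Pstar hPstarD.1.1 hPstarD.1.2
      rwa [hFeq, hFeq] at this
    have h2 : F Pstar ≤ F P := hminAll P ⟨hPn, hPc⟩
    set Pm : (∀ ℓ, I ℓ) → ℝ := fun k => (P k + Pstar k) / 2 with hPm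
    have hPmC : Pm ∈ C := by
      refine ⟨fun k => ?_, hmid P Pstar hPc hPstarD.1.2⟩
      have := hPn k; have := hPstarD.1.1 k
      simp only [hPm]; linarith
    have h3 : F Pstar ≤ F Pm := hminAll Pm hPmC
    have h4 : F Pm < (F P + F Pstar) / 2 :=
      hstrict P Pstar hPn hPstarD.1.1 hne
    linarith
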